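/- arXiv:1512.04234 — 3 statements merged into one kernel-verified Lean document; each statement's English description precedes it below -/
import Mathlib

section
/- Let β > 1 and d a positive integer. Suppose there exists a sequence of pairwise distinct nonzero real numbers (q_n) tending to 0, where each q_n = ∑_{k=0}^{m_n} c_k^{(n)} β^{-k-1} for some integers c_k^{(n)} with |c_k^{(n)}| ≤ d and c_0^{(n)} ≠ 0. Then there exists an infinite sequence (x_i)_{i≥1} of integers with |x_i| ≤ d, x_1 ≠ 0, and ∑_{i≥1} x_i β^{-i} = 0. -/
open Filter

private lemma summable_digits {β : ℝ} (hβ : 1 < β) (b : ℝ) (c : ℕ → ℝ)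
    (hc : ∀ i, |c i| ≤ b) : Summable (fun i => c i / β ^ (i + 1)) := by
  have hβ0 : (0:ℝ) < β := lt_trans one_pos hβ
  have hr1 : 1/β < 1 := by rw [div_lt_one hβ0]; exact hβ
  have hg : Summable (fun i : ℕ => (b/β) * (1/β)^i) :=
    (summable_geometric_of_lt_one (by positivity) hr1).mul_left _
  apply Summable.of_norm_bounded hg
  intro i
  have h1 : ‖c i / β ^ (i+1)‖ = |c i| / β^(i+1) := by
    rw [Real.norm_eq_abs, abs_div, abs_of_pos (show (0:ℝ) < β^(i+1) by positivity)]
  have h2 : b/β * (1/β)^i = b / β^(i+1) := by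
    rw [div_pow, one_pow, div_mul_div_comm, mul_one, ← pow_succ']
  rw [h1, h2]
  exact div_le_div_of_nonneg_right (hc i) (by positivity)

private lemma diff_bound {β : ℝ} (hβ : 1 < β) (d : ℕ) (u v : ℕ → ℤ)
    (hu : ∀ i, |u i| ≤ (d:ℤ)) (hv : ∀ i, |v i| ≤ (d:ℤ)) (N : ℕ)
    (hag : ∀ i < N, u i = v i) :
    |(∑' i : ℕ, (u i:ℝ)/β^(i+1)) - ∑' i : ℕ, (v i:ℝ)/β^(i+1)|
      ≤ (2*d * ∑' i : ℕ, (1/β)^(i+1)) * (1/β)^N := by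
  have hβ0 : (0:ℝ) < β := lt_trans one_pos hβ
  have hr0 : (0:ℝ) ≤ 1/β := by positivity
  have hr1 : 1/β < 1 := by rw [div_lt_one hβ0]; exact hβ
  set a : ℕ → ℝ := fun i => ((u i : ℝ) - v i)/β^(i+1) with ha
  have habs : ∀ i, |(u i : ℝ) - v i| ≤ 2*d := by
    intro i
    have h1 : |(u i : ℝ)| ≤ d := by exact_mod_cast hu i
    have h2 : |(v i : ℝ)| ≤ d := by exact_mod_cast hv i
    calc |(u i : ℝ) - v i| ≤ |(u i : ℝ)| + |(v i : ℝ)| := abs_sub _ _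
      _ ≤ d + d := add_le_add h1 h2
      _ = 2*d := by ring
  have hsa : Summable a := summable_digits hβ (2*d) _ habs
  have hsu : Summable (fun i => (u i:ℝ)/β^(i+1)) :=
    summable_digits hβ d _ (fun i => by exact_mod_cast hu i)
  have hsv : Summable (fun i => (v i:ℝ)/β^(i+1)) :=
    summable_digits hβ d _ (fun i => by exact_mod_cast hv i)
  have hdiff : (∑' i : ℕ, (u i:ℝ)/β^(i+1)) - ∑' i : ℕ, (v i:ℝ)/β^(i+1) = ∑' i, a i := by
    rw [← Summable.tsum_sub hsu hsv]
    congr 1; funext i; rw [ha]; ring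
  rw [hdiff]
  have hsplit : ∑' i, a i = ∑ i ∈ Finset.range N, a i + ∑' i, a (i + N) :=
    (Summable.sum_add_tsum_nat_add N hsa).symm
  have hzero : ∑ i ∈ Finset.range N, a i = 0 := by
    apply Finset.sum_eq_zero
    intro i hi
    have := hag i (Finset.mem_range.mp hi)
    simp [ha, this]
  rw [hsplit, hzero, zero_add]
  -- bound the tail
  have hterm : ∀ i : ℕ, ‖a (i + N)‖ ≤ (2*d) * (1/β)^(i+1) * (1/β)^N := by
    intro i
    rw [Real.norm_eq_abs, ha]
    have hpow : (0:ℝ) < β ^ (i + N + 1) := by positivity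
    rw [abs_div, abs_of_pos hpow]
    have h1 : |(u (i+N) : ℝ) - v (i+N)| / β ^ (i + N + 1) ≤ (2*d) / β ^ (i + N + 1) := by
      gcongr
      exact habs (i+N)
    refine h1.trans (le_of_eq ?_)
    have hpe : (1/β:ℝ)^(i+1)*(1/β)^N = (1/β)^(i+N+1) := by
      rw [← pow_add]; congr 1; omega
    rw [mul_assoc, hpe, div_pow, one_pow, ← div_eq_mul_one_div]
  have hgsum : Summable (fun i : ℕ => (2*d) * (1/β)^(i+1) * (1/β)^N) := by
    apply Summable.mul_right
    apply Summable.mul_left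
    exact (summable_nat_add_iff 1).mpr (summable_geometric_of_lt_one hr0 hr1)
  calc |∑' i, a (i + N)| ≤ ∑' i : ℕ, (2*d) * (1/β)^(i+1) * (1/β)^N :=
        tsum_of_norm_bounded hgsum.hasSum hterm
    _ = (2*d * ∑' i : ℕ, (1/β)^(i+1)) * (1/β)^N := by
        rw [tsum_mul_right, tsum_mul_left]

/-- Compactness step: from a sequence of pairwise distinct nonzero numbers tending to 0,
each of the form ∑_{k=0}^{m} c_k β^{-k-1} with digits in {-d,…,d} and leading digit
c_0 ≠ 0, one extracts an infinite nontrivial β-representation of 0. -/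
theorem stmt_5 (β : ℝ) (hβ : 1 < β) (d : ℕ) (hd : 0 < d)
    (q : ℕ → ℝ) (hinj : Function.Injective q) (hne : ∀ n, q n ≠ 0)
    (hlim : Tendsto q atTop (nhds 0))
    (hrep : ∀ n, ∃ (m : ℕ) (c : ℕ → ℤ), (∀ k, |c k| ≤ (d : ℤ)) ∧ c 0 ≠ 0 ∧
      q n = ∑ k ∈ Finset.range (m + 1), (c k : ℝ) / β ^ (k + 1)) :
    ∃ x : ℕ → ℤ, (∀ i, |x i| ≤ (d : ℤ)) ∧ x 0 ≠ 0 ∧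
      ∑' i : ℕ, (x i : ℝ) / β ^ (i + 1) = 0 := by
  have hβ0 : (0:ℝ) < β := lt_trans one_pos hβ
  have hr0 : (0:ℝ) ≤ 1/β := by positivity
  have hr1 : 1/β < 1 := by rw [div_lt_one hβ0]; exact hβ
  choose m c hc hc0 hq using hrep
  set f : ℕ → ℕ → ℤ := fun n i => if i ≤ m n then c n i else 0 with hf
  have hfbd : ∀ n i, |f n i| ≤ (d:ℤ) := by
    intro n i
    simp only [hf]
    split
    · exact hc n i
    · simp
  have hf0 : ∀ n, f n 0 ≠ 0 := by
    intro n
    simpa [hf, Nat.zero_le] using hc0 n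
  have hqn : ∀ n, q n = ∑' i : ℕ, (f n i : ℝ)/β^(i+1) := by
    intro n
    rw [hq n, tsum_eq_sum (s := Finset.range (m n + 1))
      (by
        intro i hi
        simp only [Finset.mem_range, not_lt] at hi
        have : ¬ i ≤ m n := by omega
        simp [hf, this])]
    apply Finset.sum_congr rfl
    intro k hk
    have : k ≤ m n := Nat.lt_succ_iff.mp (Finset.mem_range.mp hk)
    simp [hf, this]
  -- compactness
  have hK : IsCompact (Set.univ.pi fun _ : ℕ => Set.Icc (-(d:ℤ)) (d:ℤ)) :=
    isCompact_univ_pi fun _ => (Set.finite_Icc _ _).isCompact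
  have hfK : ∀ n, f n ∈ Set.univ.pi fun _ : ℕ => Set.Icc (-(d:ℤ)) (d:ℤ) := by
    intro n i _
    exact Set.mem_Icc.mpr (abs_le.mp (hfbd n i))
  obtain ⟨x, hxK, φ, hφ, hconv⟩ := hK.tendsto_subseq hfK
  have hcoord : ∀ i, ∀ᶠ k in atTop, f (φ k) i = x i := by
    intro i
    have h1 : Tendsto (fun k => f (φ k) i) atTop (nhds (x i)) :=
      tendsto_pi_nhds.mp hconv i
    rw [nhds_discrete] at h1
    exact tendsto_pure.mp h1
  have hxbd : ∀ i, |x i| ≤ (d:ℤ) := fun i =>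
    abs_le.mpr (Set.mem_Icc.mp (hxK i (Set.mem_univ i)))
  have hx0 : x 0 ≠ 0 := by
    obtain ⟨k, hk⟩ := (hcoord 0).exists
    rw [← hk]
    exact hf0 (φ k)
  refine ⟨x, hxbd, hx0, ?_⟩
  set C : ℝ := 2*d * ∑' i : ℕ, (1/β)^(i+1) with hC
  have hten : Tendsto (fun N : ℕ => C * (1/β)^N) atTop (nhds 0) := by
    simpa using (tendsto_pow_atTop_nhds_zero_of_lt_one hr0 hr1).const_mul C
  have hqL : Tendsto (fun k => q (φ k)) atTop (nhds (∑' i : ℕ, (x i:ℝ)/β^(i+1))) := by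
    rw [Metric.tendsto_atTop]
    intro ε hε
    obtain ⟨N, hN⟩ := (hten.eventually (gt_mem_nhds hε)).exists
    have hev : ∀ᶠ k in atTop, ∀ i ∈ Finset.range N, f (φ k) i = x i :=
      (Finset.range N).eventually_all.mpr fun i _ => hcoord i
    obtain ⟨K, hK2⟩ := eventually_atTop.mp hev
    refine ⟨K, fun k hk => ?_⟩
    rw [Real.dist_eq, hqn (φ k)]
    calc |(∑' i : ℕ, (f (φ k) i : ℝ)/β^(i+1)) - ∑' i : ℕ, (x i:ℝ)/β^(i+1)|
        ≤ (2*d * ∑' i : ℕ, (1/β)^(i+1)) * (1/β)^N :=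
          diff_bound hβ d _ _ (hfbd (φ k)) hxbd N
            (fun i hi => hK2 k hk i (Finset.mem_range.mpr hi))
      _ = C * (1/β)^N := by rw [hC]
      _ < ε := hN
  have h0 : Tendsto (fun k => q (φ k)) atTop (nhds 0) := hlim.comp hφ.tendsto_atTop
  exact tendsto_nhds_unique hqL h0
end

section
/- Let β be a Pisot number and d a positive integer. Then there exists ε > 0 such that any two distinct elements of Y_d(β) = { ∑_{k=0}^{n} a_k β^k : n ∈ ℕ, a_k ∈ ℤ, |a_k| ≤ d } differ by at least ε. In particular, Y_d(β) is not dense in ℝ. -/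
open IntermediateField Polynomial

set_option maxHeartbeats 1000000

lemma garsia_sep (β : ℝ) (hβ : 1 < β) (hint : IsIntegral ℤ β)
    (hpisot : ∀ r ∈ ((minpoly ℤ β).map (Int.castRingHom ℂ)).roots,
      r ≠ (β : ℂ) → ‖r‖ < 1)
    (D : ℤ) (hD : 0 < D) :
    ∃ ε > 0, ∀ (n : ℕ) (c : ℕ → ℤ), (∀ k, |c k| ≤ D) →
      (∑ k ∈ Finset.range n, (c k : ℝ) * β ^ k) ≠ 0 →
      ε ≤ |∑ k ∈ Finset.range n, (c k : ℝ) * β ^ k| := by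
  have hintQ : IsIntegral ℚ β := hint.tower_top
  haveI : FiniteDimensional ℚ ℚ⟮β⟯ := IntermediateField.adjoin.finiteDimensional hintQ
  set K := ℚ⟮β⟯
  set g : K := IntermediateField.AdjoinSimple.gen ℚ β with hg
  have hcoe : (g : ℝ) = β := rfl
  -- the embedding corresponding to the real place
  set σ₀ : K →ₐ[ℚ] ℂ := (Complex.ofRealAm.restrictScalars ℚ).comp K.val with hσ₀def
  have hσ₀g : σ₀ g = (β : ℂ) := by
    rfl
  -- each embedding sends g to a root of minpoly ℤ β mapped to ℂ
  have hminQ : minpoly ℚ β = (minpoly ℤ β).map (Int.castRingHom ℚ) := by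
    simpa using minpoly.isIntegrallyClosed_eq_field_fractions ℚ ℝ hint
  have hroot : ∀ σ : K →ₐ[ℚ] ℂ, σ g ∈ ((minpoly ℤ β).map (Int.castRingHom ℂ)).roots := by
    intro σ
    have h1 : Polynomial.aeval (σ g) (minpoly ℚ β) = 0 := by
      rw [← IntermediateField.minpoly_gen ℚ β]
      rw [Polynomial.aeval_algHom_apply]
      refine (congrArg σ (minpoly.aeval ℚ g)).trans ?_
      exact map_zero σ
    have hne : ((minpoly ℤ β).map (Int.castRingHom ℂ)) ≠ 0 :=
      (Polynomial.map_ne_zero_iff (f := Int.castRingHom ℂ) (by simpa using (Int.cast_injective (α := ℂ)))).mpr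
        (minpoly.ne_zero hint)
    refine Polynomial.mem_roots'.mpr ⟨hne, ?_⟩
    have : ((minpoly ℤ β).map (Int.castRingHom ℂ)) = (minpoly ℚ β).map (algebraMap ℚ ℂ) := by
        rw [hminQ, Polynomial.map_map]
        congr 1
    rw [this]
    rw [Polynomial.IsRoot, Polynomial.eval_map, ← Polynomial.aeval_def]
    exact h1
  -- embeddings distinct from σ₀ send g to small roots
  have hsmall : ∀ σ : K →ₐ[ℚ] ℂ, σ ≠ σ₀ → ‖σ g‖ < 1 := by
    intro σ hσ
    apply hpisot _ (hroot σ)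
    intro hgb
    apply hσ
    apply IntermediateField.adjoin_algHom_ext
    intro x hx
    rcases hx with rfl
    have : (⟨x, IntermediateField.subset_adjoin ℚ {x} rfl⟩ : K) = g := rfl
    rw [this]; exact hgb.trans hσ₀g.symm
  classical
  set S : Finset (K →ₐ[ℚ] ℂ) := Finset.univ.erase σ₀ with hS
  set B : (K →ₐ[ℚ] ℂ) → ℝ := fun σ => (D : ℝ) / (1 - ‖σ g‖) with hB
  have hBpos : ∀ σ ∈ S, 0 < B σ := by
    intro σ hσ
    have h1 := hsmall σ (Finset.ne_of_mem_erase hσ)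
    exact div_pos (by exact_mod_cast hD) (by linarith)
  set P : ℝ := ∏ σ ∈ S, B σ with hP
  have hPpos : 0 < P := Finset.prod_pos hBpos
  refine ⟨P⁻¹, inv_pos.mpr hPpos, ?_⟩
  intro n c hc hne
  set x : K := ∑ k ∈ Finset.range n, (c k : K) * g ^ k with hx
  have hxval : (x : ℝ) = ∑ k ∈ Finset.range n, (c k : ℝ) * β ^ k := by
    rw [hx]
    push_cast
    rfl
  have hxne : x ≠ 0 := by
    intro h
    apply hne
    rw [← hxval, h]
    simp
  -- integrality of x over ℤ
  have hinj : Function.Injective (algebraMap K ℝ) := (algebraMap (↥K) ℝ).injective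
  have hgInt : IsIntegral ℤ g := by
    refine (isIntegral_algebraMap_iff hinj).mp ?_
    rw [IntermediateField.AdjoinSimple.algebraMap_gen]
    exact hint
  have hxInt : IsIntegral ℤ x := by
    have : x ∈ integralClosure ℤ K := by
      rw [hx]
      apply Subalgebra.sum_mem
      intro k _
      exact Subalgebra.mul_mem _ (Subalgebra.intCast_mem _ _)
        (Subalgebra.pow_mem _ hgInt _)
    exact this
  have hNint : IsIntegral ℤ (Algebra.norm ℚ x) := Algebra.isIntegral_norm ℚ hxInt
  obtain ⟨m, hm⟩ := IsIntegrallyClosed.isIntegral_iff.mp hNint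
  have hNne : Algebra.norm ℚ x ≠ 0 := by
    rw [Algebra.norm_ne_zero_iff]
    exact hxne
  have hm0 : m ≠ 0 := by
    rintro rfl
    apply hNne
    rw [← hm]
    simp
  -- 1 ≤ product of |σ x|
  have key : (1 : ℝ) ≤ ∏ σ : K →ₐ[ℚ] ℂ, ‖σ x‖ := by
    have h1 : ‖algebraMap ℚ ℂ (Algebra.norm ℚ x)‖
        = ∏ σ : K →ₐ[ℚ] ℂ, ‖σ x‖ := by
      rw [Algebra.norm_eq_prod_embeddings, norm_prod]
    rw [← h1, ← hm, ← IsScalarTower.algebraMap_apply ℤ ℚ ℂ]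
    simp only [algebraMap_int_eq, eq_intCast, Complex.norm_intCast]
    exact_mod_cast Int.one_le_abs hm0
  -- geometric series bound
  have geom : ∀ ρ : ℝ, 0 ≤ ρ → ρ < 1 → ∑ k ∈ Finset.range n, ρ ^ k ≤ (1 - ρ)⁻¹ := by
    intro ρ h0 h1
    have h2 : 0 < 1 - ρ := by linarith
    rw [inv_eq_one_div, le_div_iff₀ h2]
    nlinarith [geom_sum_mul ρ n, pow_nonneg h0 n]
  -- bound for each embedding other than σ₀
  have hbound : ∀ σ ∈ S, ‖σ x‖ ≤ B σ := by
    intro σ hσ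
    have hρ1 : ‖σ g‖ < 1 := hsmall σ (Finset.ne_of_mem_erase hσ)
    have hρ0 : 0 ≤ ‖σ g‖ := norm_nonneg _
    have hσx : σ x = ∑ k ∈ Finset.range n, (c k : ℂ) * (σ g) ^ k := by
      rw [hx, map_sum]
      refine Finset.sum_congr rfl fun k _ => ?_
      rw [map_mul, map_pow, map_intCast]
    rw [hσx]
    calc ‖∑ k ∈ Finset.range n, (c k : ℂ) * (σ g) ^ k‖
        ≤ ∑ k ∈ Finset.range n, ‖(c k : ℂ) * (σ g) ^ k‖ :=
          norm_sum_le _ _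
      _ ≤ ∑ k ∈ Finset.range n, (D : ℝ) * (‖σ g‖) ^ k := by
          refine Finset.sum_le_sum fun k _ => ?_
          rw [norm_mul, norm_pow, Complex.norm_intCast]
          refine mul_le_mul_of_nonneg_right ?_ (pow_nonneg hρ0 k)
          exact_mod_cast hc k
      _ = (D : ℝ) * ∑ k ∈ Finset.range n, (‖σ g‖) ^ k := by
          rw [Finset.mul_sum]
      _ ≤ (D : ℝ) * (1 - ‖σ g‖)⁻¹ := by
          refine mul_le_mul_of_nonneg_left (geom _ hρ0 hρ1) ?_
          exact_mod_cast hD.le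
      _ = B σ := by simp [hB, div_eq_mul_inv]
  have split : ∏ σ : K →ₐ[ℚ] ℂ, ‖σ x‖
      = ‖σ₀ x‖ * ∏ σ ∈ S, ‖σ x‖ :=
    (Finset.mul_prod_erase Finset.univ _ (Finset.mem_univ σ₀)).symm
  have hprodle : ∏ σ ∈ S, ‖σ x‖ ≤ P :=
    Finset.prod_le_prod (fun σ _ => norm_nonneg _) hbound
  have h1le : (1 : ℝ) ≤ ‖σ₀ x‖ * P := by
    refine le_trans key ?_
    rw [split]
    exact mul_le_mul_of_nonneg_left hprodle (norm_nonneg _)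
  have hfin : P⁻¹ ≤ ‖σ₀ x‖ := by
    rw [inv_eq_one_div]
    rw [div_le_iff₀ hPpos]
    exact h1le
  have hσ₀x : ‖σ₀ x‖ = |∑ k ∈ Finset.range n, (c k : ℝ) * β ^ k| := by
    have : σ₀ x = ((x : ℝ) : ℂ) := rfl
    rw [this, Complex.norm_real, Real.norm_eq_abs, hxval]
  rwa [hσ₀x] at hfin

/-- For a Pisot number β, the spectrum Y_d(β) is uniformly discrete: distinct elements
differ by at least some ε > 0; in particular Y_d(β) is not dense in ℝ. -/
theorem stmt_8 (β : ℝ) (hβ : 1 < β) (hint : IsIntegral ℤ β)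
    (hpisot : ∀ r ∈ ((minpoly ℤ β).map (Int.castRingHom ℂ)).roots,
      r ≠ (β : ℂ) → ‖r‖ < 1)
    (d : ℕ) (hd : 0 < d) :
    (∃ ε > 0, ∀ x ∈ {r : ℝ | ∃ (n : ℕ) (a : ℕ → ℤ), (∀ k, |a k| ≤ (d : ℤ)) ∧
          r = ∑ k ∈ Finset.range (n + 1), (a k : ℝ) * β ^ k},
        ∀ y ∈ {r : ℝ | ∃ (n : ℕ) (a : ℕ → ℤ), (∀ k, |a k| ≤ (d : ℤ)) ∧
          r = ∑ k ∈ Finset.range (n + 1), (a k : ℝ) * β ^ k},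
        x ≠ y → ε ≤ |x - y|) ∧
      ¬ Dense {r : ℝ | ∃ (n : ℕ) (a : ℕ → ℤ), (∀ k, |a k| ≤ (d : ℤ)) ∧
          r = ∑ k ∈ Finset.range (n + 1), (a k : ℝ) * β ^ k} := by
  obtain ⟨ε, hε, hsep⟩ := garsia_sep β hβ hint hpisot (2 * d) (by positivity)
  set Y : Set ℝ := {r : ℝ | ∃ (n : ℕ) (a : ℕ → ℤ), (∀ k, |a k| ≤ (d : ℤ)) ∧
      r = ∑ k ∈ Finset.range (n + 1), (a k : ℝ) * β ^ k} with hY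
  have main : ∀ x ∈ Y, ∀ y ∈ Y, x ≠ y → ε ≤ |x - y| := by
    rintro x ⟨n₁, a, ha, rfl⟩ y ⟨n₂, b, hb, rfl⟩ hxy
    set N := max n₁ n₂ + 1 with hN
    set c : ℕ → ℤ := fun k =>
      (if k < n₁ + 1 then a k else 0) - (if k < n₂ + 1 then b k else 0) with hcdef
    have hcb : ∀ k, |c k| ≤ 2 * (d : ℤ) := by
      intro k
      have h1 := ha k
      have h2 := hb k
      have h3 := abs_nonneg (a k)
      have h4 := abs_nonneg (b k)
      have htri := abs_sub (a k) (b k)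
      simp only [hcdef]
      split_ifs <;> simp <;> linarith
    have ha' : ∑ k ∈ Finset.range N, ((if k < n₁ + 1 then a k else 0 : ℤ) : ℝ) * β ^ k
        = ∑ k ∈ Finset.range (n₁ + 1), (a k : ℝ) * β ^ k := by
      rw [← Finset.sum_subset
          (Finset.range_subset_range.mpr (show n₁ + 1 ≤ N from Nat.succ_le_succ le_sup_left))
          (fun k _ hk => by rw [if_neg (by simpa using hk)]; simp)]
      exact Finset.sum_congr rfl fun k hk => by rw [if_pos (Finset.mem_range.mp hk)]
    have hb' : ∑ k ∈ Finset.range N, ((if k < n₂ + 1 then b k else 0 : ℤ) : ℝ) * β ^ k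
        = ∑ k ∈ Finset.range (n₂ + 1), (b k : ℝ) * β ^ k := by
      rw [← Finset.sum_subset
          (Finset.range_subset_range.mpr (show n₂ + 1 ≤ N from Nat.succ_le_succ le_sup_right))
          (fun k _ hk => by rw [if_neg (by simpa using hk)]; simp)]
      exact Finset.sum_congr rfl fun k hk => by rw [if_pos (Finset.mem_range.mp hk)]
    have hdiff : (∑ k ∈ Finset.range (n₁ + 1), (a k : ℝ) * β ^ k)
        - (∑ k ∈ Finset.range (n₂ + 1), (b k : ℝ) * β ^ k)
        = ∑ k ∈ Finset.range N, (c k : ℝ) * β ^ k := by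
      rw [← ha', ← hb', ← Finset.sum_sub_distrib]
      refine Finset.sum_congr rfl fun k _ => ?_
      simp only [hcdef]
      push_cast
      ring
    rw [hdiff]
    have hne : ∑ k ∈ Finset.range N, (c k : ℝ) * β ^ k ≠ 0 := by
      rw [← hdiff]
      exact sub_ne_zero.mpr hxy
    have := hsep N c (by exact_mod_cast hcb) hne
    exact this
  refine ⟨⟨ε, hε, main⟩, ?_⟩
  intro hdense
  have h0 : (0 : ℝ) ∈ Y := ⟨0, fun _ => 0, by simp, by simp⟩
  obtain ⟨y, hy⟩ := Metric.dense_iff.mp hdense (ε / 2) (ε / 4) (by positivity)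
  obtain ⟨hy1, hy2⟩ := hy
  rw [Metric.mem_ball, Real.dist_eq] at hy1
  have hyne : y ≠ 0 := by
    rintro rfl
    rw [zero_sub, abs_neg, abs_of_pos (by positivity)] at hy1
    linarith
  have := main y hy2 0 h0 hyne
  rw [sub_zero] at this
  have htri : |y| - |ε / 2| ≤ |y - ε / 2| := abs_sub_abs_le_abs_sub y (ε / 2)
  rw [abs_of_pos (show (0:ℝ) < ε / 2 by positivity)] at htri
  linarith
end

section
/- Let β be a Pisot number, d a positive integer, and c > 0 a real number. Then the set Y_d(β) ∩ [-c, c] is finite, where Y_d(β) = { ∑_{k=0}^{n} a_k β^k : n ∈ ℕ, a_k ∈ ℤ, |a_k| ≤ d }. In particular, taking d = ⌈β⌉ - 1 and c = (⌈β⌉-1)/(β-1), every Pisot number is an F-number. -/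
open Polynomial IntermediateField

lemma key_finite (β : ℝ) (hβ : 1 < β) (hint : IsIntegral ℤ β)
    (hpisot : ∀ r ∈ ((minpoly ℤ β).map (Int.castRingHom ℂ)).roots,
      r ≠ (β : ℂ) → ‖r‖ < 1) (D : ℤ) (hD : 0 ≤ D) (c : ℝ) (hc : 0 < c) :
    ({r : ℝ | ∃ (n : ℕ) (a : ℕ → ℤ), (∀ k, |a k| ≤ D) ∧
        r = ∑ k ∈ Finset.range (n + 1), (a k : ℝ) * β ^ k} ∩
      Set.Icc (-c) c).Finite := by
  classical
  have hQ : IsIntegral ℚ β := hint.tower_top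
  haveI : FiniteDimensional ℚ ℚ⟮β⟯ := IntermediateField.adjoin.finiteDimensional hQ
  haveI : NumberField ℚ⟮β⟯ := ⟨⟩
  set b : ℚ⟮β⟯ := IntermediateField.AdjoinSimple.gen ℚ β with hbdef
  have hbR : algebraMap ℚ⟮β⟯ ℝ b = β := IntermediateField.AdjoinSimple.algebraMap_gen ℚ β
  have hbint : IsIntegral ℤ b := by
    rw [← isIntegral_algebraMap_iff (R := ℤ) (algebraMap ℚ⟮β⟯ ℝ).injective, hbR]
    exact hint
  have hmin : minpoly ℤ b = minpoly ℤ β := by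
    rw [← minpoly.algebraMap_eq (algebraMap ℚ⟮β⟯ ℝ).injective b, hbR]
  have hroot : ∀ φ : ℚ⟮β⟯ →+* ℂ, φ b ∈ ((minpoly ℤ β).map (Int.castRingHom ℂ)).roots := by
    intro φ
    rw [Polynomial.mem_roots
      ((Polynomial.map_ne_zero_iff (RingHom.injective_int _)).mpr (minpoly.ne_zero hint))]
    rw [Polynomial.IsRoot, Polynomial.eval_map, ← hmin]
    have h2 := congrArg φ (minpoly.aeval ℤ b)
    rw [Polynomial.aeval_def, Polynomial.hom_eval₂, map_zero] at h2
    rwa [RingHom.ext_int (Int.castRingHom ℂ) (φ.comp (algebraMap ℤ ℚ⟮β⟯))]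
  set S := ((minpoly ℤ β).map (Int.castRingHom ℂ)).roots.toFinset with hS
  set B : ℝ := c + ∑ r ∈ S, (if ‖r‖ < 1 then (D : ℝ) / (1 - ‖r‖) else 0)
    with hB
  have hterm_nonneg : ∀ r ∈ S,
      0 ≤ (if ‖r‖ < 1 then (D : ℝ) / (1 - ‖r‖) else 0) := by
    intro r _
    split
    · apply div_nonneg (by exact_mod_cast hD)
      linarith
    · exact le_refl 0
  have hcB : c ≤ B := by
    have := Finset.sum_nonneg hterm_nonneg
    simp only [hB]; linarith
  have hkey : ∀ r ∈ S, ‖r‖ < 1 → (D : ℝ) / (1 - ‖r‖) ≤ B := by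
    intro r hr h1
    have h2 := Finset.single_le_sum hterm_nonneg hr
    rw [if_pos h1] at h2
    simp only [hB]; linarith
  have hfin := NumberField.Embeddings.finite_of_norm_le ℚ⟮β⟯ ℂ B
  refine Set.Finite.subset (hfin.image (algebraMap ℚ⟮β⟯ ℝ)) ?_
  rintro y ⟨⟨n, a, ha, rfl⟩, hyc⟩
  refine ⟨∑ k ∈ Finset.range (n + 1), (a k : ℚ⟮β⟯) * b ^ k, ⟨?_, ?_⟩, ?_⟩
  · apply IsIntegral.sum
    intro k _
    have h1 : IsIntegral ℤ ((a k : ℚ⟮β⟯)) := by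
      have := isIntegral_algebraMap (R := ℤ) (A := ℚ⟮β⟯) (x := a k)
      rwa [algebraMap_int_eq] at this
    exact h1.mul (hbint.pow k)
  · intro φ
    have hφ : φ (∑ k ∈ Finset.range (n + 1), (a k : ℚ⟮β⟯) * b ^ k)
        = ∑ k ∈ Finset.range (n + 1), (a k : ℂ) * (φ b) ^ k := by
      rw [map_sum]
      exact Finset.sum_congr rfl fun k _ => by rw [map_mul, map_pow, map_intCast]
    rw [hφ]
    by_cases hcase : φ b = (β : ℂ)
    · rw [hcase]
      have : ∑ k ∈ Finset.range (n + 1), (a k : ℂ) * (β : ℂ) ^ k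
          = ((∑ k ∈ Finset.range (n + 1), (a k : ℝ) * β ^ k : ℝ) : ℂ) := by
        push_cast; ring
      rw [this, Complex.norm_real]
      rw [Set.mem_Icc] at hyc
      calc ‖(∑ k ∈ Finset.range (n + 1), (a k : ℝ) * β ^ k : ℝ)‖ ≤ c := by
            rw [Real.norm_eq_abs, abs_le]; exact hyc
        _ ≤ B := hcB
    · have hrS : φ b ∈ S := Multiset.mem_toFinset.mpr (hroot φ)
      have hr1 : ‖φ b‖ < 1 := hpisot _ (hroot φ) hcase
      have hnormb : ‖φ b‖ < 1 := by exact hr1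
      have h0 : (0:ℝ) ≤ ‖φ b‖ := norm_nonneg _
      calc ‖∑ k ∈ Finset.range (n + 1), (a k : ℂ) * (φ b) ^ k‖
          ≤ ∑ k ∈ Finset.range (n + 1), ‖(a k : ℂ) * (φ b) ^ k‖ := norm_sum_le _ _
        _ ≤ ∑ k ∈ Finset.range (n + 1), (D : ℝ) * ‖φ b‖ ^ k := by
            apply Finset.sum_le_sum
            intro k _
            rw [norm_mul, norm_pow]
            apply mul_le_mul_of_nonneg_right _ (pow_nonneg h0 k)
            rw [Complex.norm_intCast]
            exact_mod_cast ha k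
        _ = (D : ℝ) * ∑ k ∈ Finset.range (n + 1), ‖φ b‖ ^ k := by rw [Finset.mul_sum]
        _ ≤ (D : ℝ) * (1 - ‖φ b‖)⁻¹ := by
            apply mul_le_mul_of_nonneg_left _ (by exact_mod_cast hD)
            have hsum := Summable.sum_le_tsum (Finset.range (n + 1))
              (fun i _ => pow_nonneg h0 i) (summable_geometric_of_lt_one h0 hnormb)
            rwa [tsum_geometric_of_lt_one h0 hnormb] at hsum
        _ ≤ B := by
            rw [← div_eq_mul_inv]
            have := hkey _ hrS hr1
            exact this
  · rw [map_sum]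
    refine Finset.sum_congr rfl fun k _ => ?_
    rw [map_mul, map_pow, map_intCast, hbR]

/-- For a Pisot number β, every bounded part Y_d(β) ∩ [-c, c] of the spectrum is finite
(for any positive integer d and any c > 0); in particular (d = ⌈β⌉-1,
c = (⌈β⌉-1)/(β-1)) every Pisot number is an F-number. -/
theorem stmt_9 (β : ℝ) (hβ : 1 < β) (hint : IsIntegral ℤ β)
    (hpisot : ∀ r ∈ ((minpoly ℤ β).map (Int.castRingHom ℂ)).roots,
      r ≠ (β : ℂ) → ‖r‖ < 1) :
    (∀ (d : ℕ), 0 < d → ∀ c : ℝ, 0 < c →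
      ({r : ℝ | ∃ (n : ℕ) (a : ℕ → ℤ), (∀ k, |a k| ≤ (d : ℤ)) ∧
          r = ∑ k ∈ Finset.range (n + 1), (a k : ℝ) * β ^ k} ∩
        Set.Icc (-c) c).Finite) ∧
      ({r : ℝ | ∃ (n : ℕ) (a : ℕ → ℤ), (∀ k, |a k| ≤ ⌈β⌉ - 1) ∧
          r = ∑ k ∈ Finset.range (n + 1), (a k : ℝ) * β ^ k} ∩
        Set.Icc (-((⌈β⌉ - 1 : ℝ)) / (β - 1)) ((⌈β⌉ - 1 : ℝ) / (β - 1))).Finite := by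
  constructor
  · intro d _ c hc
    exact key_finite β hβ hint hpisot d (by positivity) c hc
  · have h1 : (1 : ℤ) < ⌈β⌉ := Int.lt_ceil.mpr (by exact_mod_cast hβ)
    have h1R : (1 : ℝ) < (⌈β⌉ : ℝ) := by exact_mod_cast h1
    rw [neg_div]
    exact key_finite β hβ hint hpisot (⌈β⌉ - 1) (by omega)
      ((⌈β⌉ - 1 : ℝ) / (β - 1)) (div_pos (by linarith) (by linarith))
end
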